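/- Let 0 < R ≤ ∞ and let ψ be a quasiconcave function on [0,R). Then there exists a constant C > 0 such that ∫₀ᴿ T_ψ f(t) dt ≤ C · ∫₀ᴿ f(t) dt for every nonnegative nonincreasing measurable function f on (0,R) if and only if ψ satisfies the B-condition. (This is the statement that T_ψ : L¹ → L¹ is bounded if and only if ψ ∈ B.) -/

import Mathlib

open MeasureTheory Set ENNReal Filter

noncomputable section

/-- The open interval `(0, R)` inside `ℝ`, where `R ∈ (0, ∞]` is an extended real. -/
def DomIoo (R : ℝ≥0∞) : Set ℝ := {t : ℝ | 0 < t ∧ ENNReal.ofReal t < R}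

/-- The part of `(0, R)` lying strictly above `t`. -/
def DomAbove (R : ℝ≥0∞) (t : ℝ) : Set ℝ := {s : ℝ | t < s ∧ ENNReal.ofReal s < R}

/-- `φ : [0, R) → [0, ∞)` is quasiconcave: it vanishes exactly at `0`, is nondecreasing,
and `t ↦ φ(t)/t` is nonincreasing on `(0, R)`.  (Values on `(0, R)` are finite.) -/
def QuasiConcaveOn (R : ℝ≥0∞) (φ : ℝ → ℝ≥0∞) : Prop :=
  φ 0 = 0 ∧
  (∀ t ∈ DomIoo R, 0 < φ t ∧ φ t < ⊤) ∧
  (∀ s t : ℝ, 0 ≤ s → s ≤ t → t ∈ DomIoo R → φ s ≤ φ t) ∧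
  (∀ s t : ℝ, s ∈ DomIoo R → s ≤ t → t ∈ DomIoo R →
    φ t / ENNReal.ofReal t ≤ φ s / ENNReal.ofReal s)

/-- `f` is a nonnegative nonincreasing measurable function on `(0, R)`
(nonnegativity is built into the codomain `[0, ∞]`). -/
def NonincOn (R : ℝ≥0∞) (f : ℝ → ℝ≥0∞) : Prop :=
  Measurable f ∧ ∀ s t : ℝ, s ∈ DomIoo R → s ≤ t → t ∈ DomIoo R → f t ≤ f s

/-- The level function `f**(t) = (1/t) ∫₀ᵗ f(s) ds`. -/
def dstar (f : ℝ → ℝ≥0∞) (t : ℝ) : ℝ≥0∞ :=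
  (∫⁻ s in Ioo (0 : ℝ) t, f s) / ENNReal.ofReal t

/-- The supremum operator `S_φ f(t) = (1/φ(t)) ⋅ sup_{0<s<t} φ(s) f(s)`. -/
def Ssup (φ f : ℝ → ℝ≥0∞) (t : ℝ) : ℝ≥0∞ :=
  (⨆ s ∈ Ioo (0 : ℝ) t, φ s * f s) / φ t

/-- The supremum operator `T_ψ f(t) = (1/ψ(t)) ⋅ sup_{t<s<R} ψ(s) f(s)`. -/
def Tsup (R : ℝ≥0∞) (ψ f : ℝ → ℝ≥0∞) (t : ℝ) : ℝ≥0∞ :=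
  (⨆ s ∈ DomAbove R t, ψ s * f s) / ψ t

/-- The `B`-condition: `∫₀ᵗ ds/φ(s) ≤ C ⋅ t/φ(t)` on `(0, R)` for some constant `C > 0`. -/
def BCond (R : ℝ≥0∞) (φ : ℝ → ℝ≥0∞) : Prop :=
  ∃ C : ℝ, 0 < C ∧ ∀ t ∈ DomIoo R,
    (∫⁻ s in Ioo (0 : ℝ) t, 1 / φ s) ≤ ENNReal.ofReal C * (ENNReal.ofReal t / φ t)

/-- A weight on `(0, R)`: positive, measurable and locally integrable
(with finite integral near the origin). -/
def IsWeight (R : ℝ≥0∞) (w : ℝ → ℝ≥0∞) : Prop :=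
  Measurable w ∧ (∀ t ∈ DomIoo R, 0 < w t ∧ w t < ⊤) ∧
  ∀ t ∈ DomIoo R, (∫⁻ s in Ioo (0 : ℝ) t, w s) < ⊤

/-- Nontriviality of a weight `w` for the exponent `p`:
`∫₁^∞ s^{-p} w(s) ds < ∞` when `R = ∞`, and `∫₀ᴿ s^{-p} w(s) ds = ∞` when `R < ∞`. -/
def Nontriv (R : ℝ≥0∞) (p : ℝ) (w : ℝ → ℝ≥0∞) : Prop :=
  (R = ⊤ → (∫⁻ s in Ioi (1 : ℝ), ENNReal.ofReal s ^ (-p) * w s) < ⊤) ∧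
  (R ≠ ⊤ → (∫⁻ s in DomIoo R, ENNReal.ofReal s ^ (-p) * w s) = ⊤)

lemma mem_DomIoo {R : ℝ≥0∞} {t : ℝ} : t ∈ DomIoo R ↔ 0 < t ∧ ENNReal.ofReal t < R := Iff.rfl
lemma mem_DomAbove {R : ℝ≥0∞} {t s : ℝ} : s ∈ DomAbove R t ↔ t < s ∧ ENNReal.ofReal s < R := Iff.rfl

lemma measurableSet_DomIoo (R : ℝ≥0∞) : MeasurableSet (DomIoo R) := by
  have : DomIoo R = Ioi (0:ℝ) ∩ ENNReal.ofReal ⁻¹' (Iio R) := rfl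
  rw [this]
  exact measurableSet_Ioi.inter (ENNReal.measurable_ofReal measurableSet_Iio)

lemma measurableSet_DomAbove (R : ℝ≥0∞) (t : ℝ) : MeasurableSet (DomAbove R t) := by
  have : DomAbove R t = Ioi t ∩ ENNReal.ofReal ⁻¹' (Iio R) := rfl
  rw [this]
  exact measurableSet_Ioi.inter (ENNReal.measurable_ofReal measurableSet_Iio)

lemma forward_dir (R : ℝ≥0∞) (ψ : ℝ → ℝ≥0∞) (hψ : QuasiConcaveOn R ψ)
    (C : ℝ) (hC : 0 < C)
    (h : ∀ f : ℝ → ℝ≥0∞, NonincOn R f →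
        (∫⁻ t in DomIoo R, Tsup R ψ f t) ≤ ENNReal.ofReal C * ∫⁻ t in DomIoo R, f t) :
    BCond R ψ := by
  obtain ⟨hψ0, hψfin, hmono, hratio⟩ := hψ
  refine ⟨2*C, by positivity, ?_⟩
  intro t₀ ht₀
  have ht₀0 : (0:ℝ) < t₀ := ht₀.1
  have hsub : Ioo (0:ℝ) t₀ ⊆ DomIoo R := fun x hx =>
    ⟨hx.1, lt_of_le_of_lt (ENNReal.ofReal_le_ofReal hx.2.le) ht₀.2⟩
  set f : ℝ → ℝ≥0∞ := (Ioo (0:ℝ) t₀).indicator (fun _ => (1:ℝ≥0∞)) with hfdef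
  have hf : NonincOn R f := by
    constructor
    · exact measurable_const.indicator measurableSet_Ioo
    · intro s t hs hst ht
      by_cases h' : t ∈ Ioo (0:ℝ) t₀
      · have hs' : s ∈ Ioo (0:ℝ) t₀ := ⟨hs.1, lt_of_le_of_lt hst h'.2⟩
        simp [hfdef, indicator_of_mem h', indicator_of_mem hs']
      · simp [hfdef, indicator_of_notMem h']
  have hIf : (∫⁻ t in DomIoo R, f t) = ENNReal.ofReal t₀ := by
    rw [hfdef, lintegral_indicator measurableSet_Ioo,
      Measure.restrict_restrict measurableSet_Ioo,
      inter_eq_self_of_subset_left hsub, setLIntegral_one, Real.volume_Ioo, sub_zero]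
  have hψt₀ := hψfin t₀ ht₀
  -- pointwise lower bound
  have key : ∀ t ∈ Ioo (0:ℝ) t₀, ψ t₀ / 2 * (ψ t)⁻¹ ≤ Tsup R ψ f t := by
    intro t ht
    set m := (t + t₀)/2 with hm
    have hmt : t < m := by rw [hm]; linarith [ht.2]
    have hmt₀ : m < t₀ := by rw [hm]; linarith [ht.1]
    have hm0 : (0:ℝ) < m := by rw [hm]; linarith [ht.1]
    have hmDom : m ∈ DomIoo R :=
      mem_DomIoo.2 ⟨hm0, lt_of_le_of_lt (ENNReal.ofReal_le_ofReal hmt₀.le) ht₀.2⟩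
    have hmAbove : m ∈ DomAbove R t := mem_DomAbove.2 ⟨hmt, hmDom.2⟩
    have hfm : f m = 1 := indicator_of_mem (show m ∈ Ioo (0:ℝ) t₀ from ⟨hm0, hmt₀⟩) _
    have h1 : ψ t₀ / 2 ≤ ψ m := by
      have hr := hratio m t₀ hmDom hmt₀.le ht₀
      have h2 : ψ t₀ / ENNReal.ofReal t₀ * ENNReal.ofReal m ≤ ψ m := by
        calc ψ t₀ / ENNReal.ofReal t₀ * ENNReal.ofReal m
            ≤ ψ m / ENNReal.ofReal m * ENNReal.ofReal m := by
              exact mul_le_mul_left hr _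
          _ = ψ m := ENNReal.div_mul_cancel (ENNReal.ofReal_pos.2 hm0).ne' ENNReal.ofReal_ne_top
      have h3 : ENNReal.ofReal t₀ / 2 ≤ ENNReal.ofReal m := by
        rw [← ENNReal.ofReal_ofNat 2, ← ENNReal.ofReal_div_of_pos (by norm_num)]
        exact ENNReal.ofReal_le_ofReal (by rw [hm]; linarith [ht.1])
      calc ψ t₀ / 2 = ψ t₀ / ENNReal.ofReal t₀ * (ENNReal.ofReal t₀ / 2) := by
            rw [div_eq_mul_inv, div_eq_mul_inv (ψ t₀), div_eq_mul_inv (ENNReal.ofReal t₀),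
              mul_assoc, ← mul_assoc (ENNReal.ofReal t₀)⁻¹,
              ENNReal.inv_mul_cancel (ENNReal.ofReal_pos.2 ht₀0).ne' ENNReal.ofReal_ne_top,
              one_mul]
        _ ≤ ψ t₀ / ENNReal.ofReal t₀ * ENNReal.ofReal m := mul_le_mul_right h3 _
        _ ≤ ψ m := h2
    calc ψ t₀ / 2 * (ψ t)⁻¹ = (ψ t₀ / 2) / ψ t := (div_eq_mul_inv _ _).symm
      _ ≤ ψ m / ψ t := ENNReal.div_le_div_right h1 _
      _ ≤ Tsup R ψ f t := by
          refine ENNReal.div_le_div_right ?_ _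
          calc ψ m = ψ m * f m := by rw [hfm, mul_one]
            _ ≤ ⨆ s ∈ DomAbove R t, ψ s * f s :=
                le_iSup₂ (f := fun s _ => ψ s * f s) m hmAbove
  have hne : ψ t₀ / 2 ≠ ⊤ := (ENNReal.div_lt_top hψt₀.2.ne two_ne_zero).ne
  have hlhs : ψ t₀ / 2 * (∫⁻ t in Ioo (0:ℝ) t₀, (ψ t)⁻¹) ≤
      ENNReal.ofReal C * ENNReal.ofReal t₀ := by
    calc ψ t₀ / 2 * (∫⁻ t in Ioo (0:ℝ) t₀, (ψ t)⁻¹)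
        = ∫⁻ t in Ioo (0:ℝ) t₀, ψ t₀ / 2 * (ψ t)⁻¹ := (lintegral_const_mul' _ _ hne).symm
      _ ≤ ∫⁻ t in Ioo (0:ℝ) t₀, Tsup R ψ f t := setLIntegral_mono' measurableSet_Ioo key
      _ ≤ ∫⁻ t in DomIoo R, Tsup R ψ f t := lintegral_mono_set hsub
      _ ≤ ENNReal.ofReal C * ∫⁻ t in DomIoo R, f t :=
          h f hf
      _ = ENNReal.ofReal C * ENNReal.ofReal t₀ := by rw [hIf]
  -- conclude
  simp only [one_div]
  rw [← mul_div_assoc, ENNReal.le_div_iff_mul_le (Or.inl hψt₀.1.ne') (Or.inl hψt₀.2.ne)]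
  calc (∫⁻ s in Ioo (0:ℝ) t₀, (ψ s)⁻¹) * ψ t₀
      = 2 * (ψ t₀ / 2 * ∫⁻ s in Ioo (0:ℝ) t₀, (ψ s)⁻¹) := by
        rw [← mul_assoc, mul_comm (2:ℝ≥0∞) (ψ t₀ / 2),
          ENNReal.div_mul_cancel two_ne_zero ENNReal.ofNat_ne_top, mul_comm]
    _ ≤ 2 * (ENNReal.ofReal C * ENNReal.ofReal t₀) := mul_le_mul_right hlhs _
    _ = ENNReal.ofReal (2*C) * ENNReal.ofReal t₀ := by
        rw [← mul_assoc, ← ENNReal.ofReal_ofNat 2, ← ENNReal.ofReal_mul (by norm_num)]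

lemma measurableSet_Sset (R : ℝ≥0∞) :
    MeasurableSet {p : ℝ × ℝ | p.1/2 < p.2 ∧ ENNReal.ofReal p.2 < R} := by
  have : {p : ℝ × ℝ | p.1/2 < p.2 ∧ ENNReal.ofReal p.2 < R}
      = {p : ℝ × ℝ | p.1/2 < p.2} ∩ (fun p : ℝ × ℝ => ENNReal.ofReal p.2) ⁻¹' (Iio R) := rfl
  rw [this]
  exact (measurableSet_lt (measurable_fst.div_const 2) measurable_snd).inter
    ((ENNReal.measurable_ofReal.comp measurable_snd) measurableSet_Iio)

lemma reverse_dir (R : ℝ≥0∞) (ψ : ℝ → ℝ≥0∞) (hψ : QuasiConcaveOn R ψ)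
    (C : ℝ) (hC : 0 < C)
    (hB : ∀ t ∈ DomIoo R, (∫⁻ s in Ioo (0:ℝ) t, 1/ψ s) ≤
      ENNReal.ofReal C * (ENNReal.ofReal t / ψ t))
    (f : ℝ → ℝ≥0∞) (hf : NonincOn R f) :
    (∫⁻ t in DomIoo R, Tsup R ψ f t) ≤
      ENNReal.ofReal (2*(C+1)) * ∫⁻ t in DomIoo R, f t := by
  obtain ⟨hψ0, hψfin, hmono, hratio⟩ := hψ
  have hmonoOn : MonotoneOn ψ (DomIoo R) := fun s hs t ht hst => hmono s t hs.1.le hst ht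
  obtain ⟨ψ₀, hψ₀m, hψ₀e⟩ :=
    aemeasurable_restrict_of_monotoneOn (measurableSet_DomIoo R) hmonoOn
  have hae : ∀ᵐ x : ℝ, x ∈ DomIoo R → ψ x = ψ₀ x :=
    (ae_restrict_iff' (measurableSet_DomIoo R)).1 hψ₀e
  set b : ℝ → ℝ≥0∞ := (DomIoo R).indicator (fun r => ψ₀ r / ENNReal.ofReal r * f r) with hbdef
  set a : ℝ → ℝ≥0∞ := (DomIoo R).indicator (fun t => (ψ₀ t)⁻¹) with hadef
  have hb_meas : Measurable b := by
    rw [hbdef]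
    exact ((hψ₀m.div ENNReal.measurable_ofReal).mul hf.1).indicator (measurableSet_DomIoo R)
  have ha_meas : Measurable a := by
    rw [hadef]
    exact (hψ₀m.inv).indicator (measurableSet_DomIoo R)
  -- Step A: pointwise bound on Tsup
  have stepA : ∀ t ∈ DomIoo R, Tsup R ψ f t ≤
      (ψ t)⁻¹ * (2 * ∫⁻ r in DomAbove R (t/2), b r) := by
    intro t ht
    have hsup : (⨆ s ∈ DomAbove R t, ψ s * f s) ≤ 2 * ∫⁻ r in DomAbove R (t/2), b r := by
      refine iSup₂_le fun s hs => ?_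
      have hs0 : (0:ℝ) < s := lt_trans ht.1 hs.1
      have hsD : s ∈ DomIoo R := mem_DomIoo.2 ⟨hs0, hs.2⟩
      have hsub2 : Ioo (s/2) s ⊆ DomAbove R (t/2) := fun r hr =>
        mem_DomAbove.2 ⟨by have h1 := hs.1; have h2 := hr.1; linarith,
          lt_of_le_of_lt (ENNReal.ofReal_le_ofReal hr.2.le) hs.2⟩
      have hpt : ∀ᵐ r : ℝ, r ∈ Ioo (s/2) s → ψ s / ENNReal.ofReal s * f s ≤ b r := by
        filter_upwards [hae] with r hr hrIoo
        have hr0 : (0:ℝ) < r := lt_trans (by linarith) hrIoo.1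
        have hrD : r ∈ DomIoo R := mem_DomIoo.2 ⟨hr0,
          lt_of_le_of_lt (ENNReal.ofReal_le_ofReal hrIoo.2.le) hs.2⟩
        rw [hbdef, indicator_of_mem hrD, ← hr hrD]
        exact mul_le_mul' (hratio r s hrD hrIoo.2.le hsD) (hf.2 r s hrD hrIoo.2.le hsD)
      have h1 : (ψ s / ENNReal.ofReal s * f s) * ENNReal.ofReal (s/2) ≤
          ∫⁻ r in Ioo (s/2) s, b r := by
        calc (ψ s / ENNReal.ofReal s * f s) * ENNReal.ofReal (s/2)
            = (ψ s / ENNReal.ofReal s * f s) * volume (Ioo (s/2) s) := by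
              rw [Real.volume_Ioo]; congr 1; ring_nf
          _ = ∫⁻ _ in Ioo (s/2) s, (ψ s / ENNReal.ofReal s * f s) :=
              (setLIntegral_const _ _).symm
          _ ≤ ∫⁻ r in Ioo (s/2) s, b r := setLIntegral_mono_ae' measurableSet_Ioo hpt
      calc ψ s * f s = (ψ s / ENNReal.ofReal s) * ENNReal.ofReal s * f s := by
            rw [ENNReal.div_mul_cancel (ENNReal.ofReal_pos.2 hs0).ne' ENNReal.ofReal_ne_top]
        _ = (ψ s / ENNReal.ofReal s * f s) * ENNReal.ofReal s := by
            rw [mul_comm _ (f s), ← mul_assoc, mul_comm (f s), mul_assoc, mul_comm (f s), ← mul_assoc]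
        _ = 2 * ((ψ s / ENNReal.ofReal s * f s) * ENNReal.ofReal (s/2)) := by
            have h2 : ENNReal.ofReal s = 2 * ENNReal.ofReal (s/2) := by
              rw [← ENNReal.ofReal_ofNat 2, ← ENNReal.ofReal_mul (by norm_num)]
              congr 1; ring
            rw [h2, ← mul_assoc, mul_comm _ (2:ℝ≥0∞), mul_assoc]
        _ ≤ 2 * ∫⁻ r in Ioo (s/2) s, b r := mul_le_mul_right h1 _
        _ ≤ 2 * ∫⁻ r in DomAbove R (t/2), b r :=
            mul_le_mul_right (lintegral_mono_set hsub2) _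
    calc Tsup R ψ f t = (⨆ s ∈ DomAbove R t, ψ s * f s) / ψ t := rfl
      _ ≤ (2 * ∫⁻ r in DomAbove R (t/2), b r) / ψ t := ENNReal.div_le_div_right hsup _
      _ = (ψ t)⁻¹ * (2 * ∫⁻ r in DomAbove R (t/2), b r) := by
          rw [div_eq_mul_inv, mul_comm]
  -- the product kernel
  set F : ℝ → ℝ → ℝ≥0∞ := fun t r =>
    ({p : ℝ × ℝ | p.1/2 < p.2 ∧ ENNReal.ofReal p.2 < R}).indicator
      (fun p => a p.1 * b p.2) (t, r) with hFdef
  have hF_meas : Measurable (Function.uncurry F) := by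
    have h : Function.uncurry F =
        ({p : ℝ × ℝ | p.1/2 < p.2 ∧ ENNReal.ofReal p.2 < R}).indicator
          (fun p => a p.1 * b p.2) := rfl
    rw [h]
    exact ((ha_meas.comp measurable_fst).mul (hb_meas.comp measurable_snd)).indicator
      (measurableSet_Sset R)
  have hFinner : ∀ t : ℝ, (∫⁻ r, F t r) = a t * ∫⁻ r in DomAbove R (t/2), b r := by
    intro t
    have h : ∀ r : ℝ, F t r = (DomAbove R (t/2)).indicator (fun r => a t * b r) r := by
      intro r
      by_cases hr : r ∈ DomAbove R (t/2)
      · rw [indicator_of_mem hr, hFdef]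
        exact indicator_of_mem (show ((t,r) : ℝ × ℝ) ∈ {p : ℝ × ℝ | p.1/2 < p.2 ∧ ENNReal.ofReal p.2 < R} from ⟨hr.1, hr.2⟩) _
      · rw [indicator_of_notMem hr, hFdef]
        refine indicator_of_notMem ?_ _
        exact fun hc => hr (mem_DomAbove.2 ⟨hc.1, hc.2⟩)
    rw [lintegral_congr h, lintegral_indicator (measurableSet_DomAbove R _),
      lintegral_const_mul _ hb_meas]
  have hswap : (∫⁻ t in DomIoo R, a t * ∫⁻ r in DomAbove R (t/2), b r)
      = ∫⁻ r, ∫⁻ t in DomIoo R, F t r := by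
    have h1 : (∫⁻ t in DomIoo R, a t * ∫⁻ r in DomAbove R (t/2), b r)
        = ∫⁻ t in DomIoo R, ∫⁻ r, F t r := lintegral_congr fun t => (hFinner t).symm
    rw [h1, lintegral_lintegral_swap hF_meas.aemeasurable]
  -- per-r bound
  have hrbound : ∀ᵐ r : ℝ, (∫⁻ t in DomIoo R, F t r) ≤
      (DomIoo R).indicator (fun r => ENNReal.ofReal (C+1) * f r) r := by
    filter_upwards [hae] with r hr
    by_cases hrD : r ∈ DomIoo R
    · rw [indicator_of_mem hrD]
      have hr0 : (0:ℝ) < r := hrD.1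
      have hFr : ∀ t : ℝ, F t r = (Iio (2*r)).indicator (fun t => a t * b r) t := by
        intro t
        by_cases h2 : t < 2*r
        · rw [indicator_of_mem (show t ∈ Iio (2*r) from h2), hFdef]
          exact indicator_of_mem (show ((t,r) : ℝ × ℝ) ∈ {p : ℝ × ℝ | p.1/2 < p.2 ∧ ENNReal.ofReal p.2 < R} from ⟨by dsimp; linarith, hrD.2⟩) _
        · rw [indicator_of_notMem (show t ∉ Iio (2*r) from h2), hFdef]
          refine indicator_of_notMem ?_ _
          intro hc
          exact h2 (by have := hc.1; dsimp at this; linarith)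
      have e1 : (∫⁻ t in DomIoo R, F t r) = (∫⁻ t in Iio (2*r) ∩ DomIoo R, a t) * b r := by
        rw [lintegral_congr hFr, lintegral_indicator measurableSet_Iio,
          Measure.restrict_restrict measurableSet_Iio, lintegral_mul_const _ ha_meas]
      have hJ : (∫⁻ t in Iio (2*r) ∩ DomIoo R, a t) ≤
          (ENNReal.ofReal C + 1) * (ENNReal.ofReal r / ψ r) := by
        have e2 : (∫⁻ t in Iio (2*r) ∩ DomIoo R, a t)
            = ∫⁻ t in Iio (2*r) ∩ DomIoo R, (ψ t)⁻¹ := by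
          refine setLIntegral_congr_fun_ae (measurableSet_Iio.inter (measurableSet_DomIoo R)) ?_
          filter_upwards [hae] with t ht hts
          rw [hadef, indicator_of_mem hts.2, ht hts.2]
        rw [e2]
        have hsubU : Iio (2*r) ∩ DomIoo R ⊆ Ioo 0 r ∪ (DomIoo R ∩ Ico r (2*r)) := by
          intro t ht
          rcases lt_or_ge t r with h | h
          · exact Or.inl ⟨ht.2.1, h⟩
          · exact Or.inr ⟨ht.2, h, ht.1⟩
        have hB1 : (∫⁻ t in Ioo (0:ℝ) r, (ψ t)⁻¹) ≤
            ENNReal.ofReal C * (ENNReal.ofReal r / ψ r) := by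
          have h := hB r hrD
          simpa [one_div] using h
        have hB2 : (∫⁻ t in DomIoo R ∩ Ico r (2*r), (ψ t)⁻¹) ≤ ENNReal.ofReal r / ψ r := by
          have hmle : ∀ t ∈ DomIoo R ∩ Ico r (2*r), (ψ t)⁻¹ ≤ (ψ r)⁻¹ := fun t ht =>
            ENNReal.inv_le_inv.2 (hmono r t hr0.le ht.2.1 ht.1)
          calc (∫⁻ t in DomIoo R ∩ Ico r (2*r), (ψ t)⁻¹)
              ≤ ∫⁻ _ in DomIoo R ∩ Ico r (2*r), (ψ r)⁻¹ :=
                setLIntegral_mono' ((measurableSet_DomIoo R).inter measurableSet_Ico) hmle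
            _ = (ψ r)⁻¹ * volume (DomIoo R ∩ Ico r (2*r)) := setLIntegral_const _ _
            _ ≤ (ψ r)⁻¹ * ENNReal.ofReal r := by
                refine mul_le_mul_right ?_ _
                calc volume (DomIoo R ∩ Ico r (2*r)) ≤ volume (Ico r (2*r)) :=
                      measure_mono inter_subset_right
                  _ = ENNReal.ofReal r := by rw [Real.volume_Ico]; congr 1; ring
            _ = ENNReal.ofReal r / ψ r := by rw [div_eq_mul_inv, mul_comm]
        calc (∫⁻ t in Iio (2*r) ∩ DomIoo R, (ψ t)⁻¹)
            ≤ ∫⁻ t in Ioo 0 r ∪ (DomIoo R ∩ Ico r (2*r)), (ψ t)⁻¹ := lintegral_mono_set hsubU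
          _ ≤ (∫⁻ t in Ioo (0:ℝ) r, (ψ t)⁻¹) + ∫⁻ t in DomIoo R ∩ Ico r (2*r), (ψ t)⁻¹ :=
              lintegral_union_le _ _ _
          _ ≤ ENNReal.ofReal C * (ENNReal.ofReal r / ψ r) + ENNReal.ofReal r / ψ r :=
              add_le_add hB1 hB2
          _ = (ENNReal.ofReal C + 1) * (ENNReal.ofReal r / ψ r) := by
              rw [add_mul, one_mul]
      rw [e1]
      have hbr : b r = ψ r / ENNReal.ofReal r * f r := by
        rw [hbdef, indicator_of_mem hrD, ← hr hrD]
      rw [hbr]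
      have hψr := hψfin r hrD
      have hxy : (ENNReal.ofReal r / ψ r) * (ψ r / ENNReal.ofReal r) = 1 := by
        rw [div_eq_mul_inv, div_eq_mul_inv, mul_assoc, ← mul_assoc (ψ r)⁻¹,
          ENNReal.inv_mul_cancel hψr.1.ne' hψr.2.ne, one_mul,
          ENNReal.mul_inv_cancel (ENNReal.ofReal_pos.2 hr0).ne' ENNReal.ofReal_ne_top]
      calc (∫⁻ t in Iio (2*r) ∩ DomIoo R, a t) * (ψ r / ENNReal.ofReal r * f r)
          ≤ ((ENNReal.ofReal C + 1) * (ENNReal.ofReal r / ψ r)) *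
              (ψ r / ENNReal.ofReal r * f r) := mul_le_mul_left hJ _
        _ = (ENNReal.ofReal C + 1) *
              ((ENNReal.ofReal r / ψ r) * (ψ r / ENNReal.ofReal r)) * f r := by
            rw [mul_assoc, mul_assoc, mul_assoc]
        _ = (ENNReal.ofReal C + 1) * f r := by rw [hxy, mul_one]
        _ = ENNReal.ofReal (C+1) * f r := by
            rw [ENNReal.ofReal_add hC.le zero_le_one, ENNReal.ofReal_one]
    · rw [indicator_of_notMem hrD]
      have hz : ∀ t : ℝ, F t r = 0 := by
        intro t
        have hbr : b r = 0 := indicator_of_notMem hrD _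
        by_cases hS : ((t,r) : ℝ × ℝ) ∈ {p : ℝ × ℝ | p.1/2 < p.2 ∧ ENNReal.ofReal p.2 < R}
        · rw [hFdef]
          simp only [indicator_of_mem hS]
          rw [hbr, mul_zero]
        · rw [hFdef]
          simp only [indicator_of_notMem hS]
      have : (∫⁻ t in DomIoo R, F t r) = 0 := by
        rw [lintegral_congr hz, lintegral_zero]
      rw [this]
  -- assemble
  have main : (∫⁻ t in DomIoo R, Tsup R ψ f t) ≤
      2 * ∫⁻ t in DomIoo R, a t * ∫⁻ r in DomAbove R (t/2), b r := by
    calc (∫⁻ t in DomIoo R, Tsup R ψ f t)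
        ≤ ∫⁻ t in DomIoo R, 2 * (a t * ∫⁻ r in DomAbove R (t/2), b r) := by
          refine setLIntegral_mono_ae' (measurableSet_DomIoo R) ?_
          filter_upwards [hae] with t ht htD
          calc Tsup R ψ f t ≤ (ψ t)⁻¹ * (2 * ∫⁻ r in DomAbove R (t/2), b r) := stepA t htD
            _ = 2 * ((ψ t)⁻¹ * ∫⁻ r in DomAbove R (t/2), b r) := by
                rw [← mul_assoc, mul_comm _ (2:ℝ≥0∞), mul_assoc]
            _ = 2 * (a t * ∫⁻ r in DomAbove R (t/2), b r) := by
                rw [hadef, indicator_of_mem htD, ht htD]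
      _ = 2 * ∫⁻ t in DomIoo R, a t * ∫⁻ r in DomAbove R (t/2), b r :=
          lintegral_const_mul' 2 _ (by norm_num)
  calc (∫⁻ t in DomIoo R, Tsup R ψ f t)
      ≤ 2 * ∫⁻ t in DomIoo R, a t * ∫⁻ r in DomAbove R (t/2), b r := main
    _ = 2 * ∫⁻ r, ∫⁻ t in DomIoo R, F t r := by rw [hswap]
    _ ≤ 2 * ∫⁻ r, (DomIoo R).indicator (fun r => ENNReal.ofReal (C+1) * f r) r :=
        mul_le_mul_right (lintegral_mono_ae hrbound) _
    _ = 2 * ∫⁻ r in DomIoo R, ENNReal.ofReal (C+1) * f r := by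
        rw [lintegral_indicator (measurableSet_DomIoo R)]
    _ = 2 * (ENNReal.ofReal (C+1) * ∫⁻ r in DomIoo R, f r) := by
        rw [lintegral_const_mul' _ _ ENNReal.ofReal_ne_top]
    _ = ENNReal.ofReal (2*(C+1)) * ∫⁻ t in DomIoo R, f t := by
        rw [← mul_assoc, ← ENNReal.ofReal_ofNat 2, ← ENNReal.ofReal_mul (by norm_num)]

/-- `T_ψ : L¹ → L¹` is bounded if and only if `ψ ∈ B`. -/
theorem statement3 (R : ℝ≥0∞) (hR : 0 < R) (ψ : ℝ → ℝ≥0∞)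
    (hψ : QuasiConcaveOn R ψ) :
    (∃ C : ℝ, 0 < C ∧ ∀ f : ℝ → ℝ≥0∞, NonincOn R f →
        (∫⁻ t in DomIoo R, Tsup R ψ f t) ≤
          ENNReal.ofReal C * ∫⁻ t in DomIoo R, f t) ↔
      BCond R ψ := by
  constructor
  · rintro ⟨C, hC, h⟩
    exact forward_dir R ψ hψ C hC h
  · rintro ⟨C, hC, hB⟩
    exact ⟨2*(C+1), by positivity, fun f hf => reverse_dir R ψ hψ C hC hB f hf⟩
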